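/- Let 1 ≤ n < d be integers and let q be a positive integer. Let γ ∈ SL_d(ℤ) and let U ∈ GL_n(ℤ/qℤ). Let R' ∈ M_{d×n}(ℤ) be any matrix whose reduction mod q satisfies γ̄·R̄' = (0; U) (the d×n matrix with top (d−n)×n block zero and bottom block U), and let S' ∈ M_{n×d}(ℤ) be any matrix whose reduction mod q equals (0 U^{−1}) (the n×d matrix with left n×(d−n) block zero and right block U^{−1}). Then the real (d+n)×(d+n) matrix n_−(q^{−1}S') · blockdiag(D_q·γ, I_n) · (n_+(q^{−1}R')·D(q))^{−1} has all entries in ℤ and determinant 1, i.e. it lies in SL_{d+n}(ℤ). -/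

import Mathlib

noncomputable section

/-- `n₊(V) = (I_d V; 0 I_n)`, with the `d`-dimensional block indexed by
`Fin (d−n) ⊕ Fin n`. -/
def nPlus (d n : ℕ) (V : Matrix (Fin (d - n) ⊕ Fin n) (Fin n) ℝ) :
    Matrix ((Fin (d - n) ⊕ Fin n) ⊕ Fin n) ((Fin (d - n) ⊕ Fin n) ⊕ Fin n) ℝ :=
  Matrix.fromBlocks 1 V 0 1

/-- `n₋(U) = (I_d 0; U I_n)`. -/
def nMinus (d n : ℕ) (U : Matrix (Fin n) (Fin (d - n) ⊕ Fin n) ℝ) :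
    Matrix ((Fin (d - n) ⊕ Fin n) ⊕ Fin n) ((Fin (d - n) ⊕ Fin n) ⊕ Fin n) ℝ :=
  Matrix.fromBlocks 1 0 U 1

/-- `D(y) = diag(y^{−n/d}·I_d, y·I_n)`. -/
def Dy (d n : ℕ) (y : ℝ) : Matrix ((Fin (d - n) ⊕ Fin n) ⊕ Fin n)
    ((Fin (d - n) ⊕ Fin n) ⊕ Fin n) ℝ :=
  Matrix.fromBlocks
    ((y ^ (-(n : ℝ) / (d : ℝ))) • (1 : Matrix (Fin (d - n) ⊕ Fin n) (Fin (d - n) ⊕ Fin n) ℝ))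
    0 0 (y • (1 : Matrix (Fin n) (Fin n) ℝ))

/-- `D_q = q^{−n/d}·diag(I_{d−n}, q·I_n) ∈ SL_d(ℝ)`. -/
def Dqmat (d n q : ℕ) : Matrix (Fin (d - n) ⊕ Fin n) (Fin (d - n) ⊕ Fin n) ℝ :=
  ((q : ℝ) ^ (-(n : ℝ) / (d : ℝ))) •
    Matrix.fromBlocks (1 : Matrix (Fin (d - n)) (Fin (d - n)) ℝ) 0 0
      ((q : ℝ) • (1 : Matrix (Fin n) (Fin n) ℝ))


lemma aux_inv {ι κ : Type*} [Fintype ι] [Fintype κ] [DecidableEq ι] [DecidableEq κ]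
    (a c : ℝ) (ha : a ≠ 0) (hc : c ≠ 0) (V : Matrix ι κ ℝ) :
    (Matrix.fromBlocks (1 : Matrix ι ι ℝ) V 0 (1 : Matrix κ κ ℝ) *
        Matrix.fromBlocks (a • (1 : Matrix ι ι ℝ)) 0 0 (c • (1 : Matrix κ κ ℝ)))⁻¹
      = Matrix.fromBlocks (a⁻¹ • 1) (-(a⁻¹ • V)) 0 (c⁻¹ • 1) := by
  apply Matrix.inv_eq_right_inv
  rw [Matrix.fromBlocks_multiply, Matrix.fromBlocks_multiply,
    ← Matrix.fromBlocks_one (l := ι) (m := κ) (α := ℝ)]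
  simp [Matrix.smul_mul, Matrix.mul_smul, smul_smul, inv_mul_cancel₀ ha, inv_mul_cancel₀ hc]

lemma aux_M {ι κ : Type*} [Fintype ι] [Fintype κ] [DecidableEq ι] [DecidableEq κ]
    (a c : ℝ) (ha : a ≠ 0) (hc : c ≠ 0) (V : Matrix ι κ ℝ) (W : Matrix κ ι ℝ)
    (A : Matrix ι ι ℝ) :
    Matrix.fromBlocks (1 : Matrix ι ι ℝ) 0 W (1 : Matrix κ κ ℝ) *
      Matrix.fromBlocks (a • A) 0 0 (1 : Matrix κ κ ℝ) *
      (Matrix.fromBlocks (1 : Matrix ι ι ℝ) V 0 (1 : Matrix κ κ ℝ) *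
        Matrix.fromBlocks (a • (1 : Matrix ι ι ℝ)) 0 0 (c • (1 : Matrix κ κ ℝ)))⁻¹
      = Matrix.fromBlocks A (-(A * V)) (W * A) (c⁻¹ • 1 - W * A * V) := by
  rw [aux_inv a c ha hc V, Matrix.fromBlocks_multiply, Matrix.fromBlocks_multiply]
  simp [Matrix.smul_mul, Matrix.mul_smul, smul_smul, inv_mul_cancel₀ ha,
    Matrix.mul_assoc, sub_eq_neg_add]

lemma mapmulR {m p o : Type*} [Fintype p] (X : Matrix m p ℤ) (Y : Matrix p o ℤ) :
    (X * Y).map (Int.cast : ℤ → ℝ) = X.map (Int.cast : ℤ → ℝ) * Y.map (Int.cast : ℤ → ℝ) := by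
  simpa using Matrix.map_mul (L := X) (M := Y) (f := Int.castRingHom ℝ)

/-- If `γ·R' ≡ (0; U)` and `S' ≡ (0 U⁻¹) mod q`, then
`n₋(q⁻¹S')·blockdiag(D_q·γ, I_n)·(n₊(q⁻¹R')·D(q))⁻¹ ∈ SL_{d+n}(ℤ)`. -/
theorem matrix_relation (d n q : ℕ) (hn : 1 ≤ n) (hnd : n < d) (hq : 0 < q)
    (γ : Matrix.SpecialLinearGroup (Fin (d - n) ⊕ Fin n) ℤ)
    (U : (Matrix (Fin n) (Fin n) (ZMod q))ˣ)
    (R' : Matrix (Fin (d - n) ⊕ Fin n) (Fin n) ℤ)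
    (hR' : (γ.val.map (Int.cast : ℤ → ZMod q)) * (R'.map (Int.cast : ℤ → ZMod q)) =
      Matrix.fromRows (0 : Matrix (Fin (d - n)) (Fin n) (ZMod q))
        (U : Matrix (Fin n) (Fin n) (ZMod q)))
    (S' : Matrix (Fin n) (Fin (d - n) ⊕ Fin n) ℤ)
    (hS' : S'.map (Int.cast : ℤ → ZMod q) =
      Matrix.fromCols (0 : Matrix (Fin n) (Fin (d - n)) (ZMod q))
        ((U⁻¹ : (Matrix (Fin n) (Fin n) (ZMod q))ˣ) : Matrix (Fin n) (Fin n) (ZMod q))) :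
    (∀ i j,
      ∃ m : ℤ,
        (nMinus d n (((q : ℝ)⁻¹) • S'.map (Int.cast : ℤ → ℝ)) *
          Matrix.fromBlocks (Dqmat d n q * γ.val.map (Int.cast : ℤ → ℝ)) 0 0
            (1 : Matrix (Fin n) (Fin n) ℝ) *
          (nPlus d n (((q : ℝ)⁻¹) • R'.map (Int.cast : ℤ → ℝ)) * Dy d n (q : ℝ))⁻¹) i j
          = (m : ℝ)) ∧
    (nMinus d n (((q : ℝ)⁻¹) • S'.map (Int.cast : ℤ → ℝ)) *
      Matrix.fromBlocks (Dqmat d n q * γ.val.map (Int.cast : ℤ → ℝ)) 0 0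
        (1 : Matrix (Fin n) (Fin n) ℝ) *
      (nPlus d n (((q : ℝ)⁻¹) • R'.map (Int.cast : ℤ → ℝ)) * Dy d n (q : ℝ))⁻¹).det = 1 := by
  haveI : NeZero q := ⟨hq.ne'⟩
  have hc : (q : ℝ) ≠ 0 := Nat.cast_ne_zero.2 hq.ne'
  set a : ℝ := (q : ℝ) ^ (-(n : ℝ) / (d : ℝ)) with ha_def
  have ha : a ≠ 0 := (Real.rpow_pos_of_pos (by exact_mod_cast hq) _).ne'
  set w : (Fin (d - n) ⊕ Fin n) → ℤ := Sum.elim (fun _ => (1 : ℤ)) (fun _ => (q : ℤ)) with hw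
  set Ez : Matrix (Fin (d - n) ⊕ Fin n) (Fin (d - n) ⊕ Fin n) ℤ := Matrix.diagonal w with hEz
  set P : Matrix (Fin (d - n) ⊕ Fin n) (Fin n) ℤ := γ.val * R' with hP
  -- mod q facts
  have hmapmul : ∀ {m o : Type} [Fintype m] [Fintype o] [DecidableEq m] [DecidableEq o]
      (X : Matrix m (Fin (d-n) ⊕ Fin n) ℤ) (Y : Matrix (Fin (d-n) ⊕ Fin n) o ℤ),
      (X * Y).map (Int.cast : ℤ → ZMod q)
        = X.map (Int.cast : ℤ → ZMod q) * Y.map (Int.cast : ℤ → ZMod q) := by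
    intro m o _ _ _ _ X Y
    simpa using Matrix.map_mul (L := X) (M := Y) (f := Int.castRingHom (ZMod q))
  have hPc : P.map (Int.cast : ℤ → ZMod q) =
      Matrix.fromRows 0 (U : Matrix (Fin n) (Fin n) (ZMod q)) := by
    rw [hP, hmapmul, hR']
  have hPdvd : ∀ (i : Fin (d - n)) (j : Fin n), (q : ℤ) ∣ P (Sum.inl i) j := by
    intro i j
    have h := congrFun (congrFun hPc (Sum.inl i)) j
    simp only [Matrix.map_apply, Matrix.fromRows_apply_inl, Matrix.zero_apply] at h
    exact (ZMod.intCast_zmod_eq_zero_iff_dvd _ q).1 h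
  have hSdvd : ∀ (i : Fin n) (k : Fin (d - n)), (q : ℤ) ∣ S' i (Sum.inl k) := by
    intro i k
    have h := congrFun (congrFun hS' i) (Sum.inl k)
    simp only [Matrix.map_apply, Matrix.fromCols_apply_inl, Matrix.zero_apply] at h
    exact (ZMod.intCast_zmod_eq_zero_iff_dvd _ q).1 h
  have hSU : ∀ (i k : Fin n), ((S' i (Sum.inr k) : ℤ) : ZMod q)
      = ((U⁻¹ : (Matrix (Fin n) (Fin n) (ZMod q))ˣ) : Matrix (Fin n) (Fin n) (ZMod q)) i k := by
    intro i k
    have h := congrFun (congrFun hS' i) (Sum.inr k)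
    simpa using h
  have hPU : ∀ (k j : Fin n), ((P (Sum.inr k) j : ℤ) : ZMod q)
      = (U : Matrix (Fin n) (Fin n) (ZMod q)) k j := by
    intro k j
    have h := congrFun (congrFun hPc (Sum.inr k)) j
    simpa using h
  have hwP : ∀ (i : Fin (d-n) ⊕ Fin n) (j : Fin n), (q : ℤ) ∣ w i * P i j := by
    intro i j
    rcases i with i | i
    · simpa [hw] using (hPdvd i j)
    · exact Dvd.dvd.mul_right (by simp [hw]) _
  set K : Matrix (Fin (d - n) ⊕ Fin n) (Fin n) ℤ := Ez * P with hK
  have hKw : ∀ i j, K i j = w i * P i j := by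
    intro i j; rw [hK, hEz, Matrix.diagonal_mul]
  set L : Matrix (Fin n) (Fin (d - n) ⊕ Fin n) ℤ := S' * Ez * γ.val with hL
  have hLdvd : ∀ i j, (q : ℤ) ∣ L i j := by
    intro i j
    rw [hL, Matrix.mul_apply]
    refine Finset.dvd_sum fun b _ => ?_
    rw [hEz, Matrix.mul_diagonal]
    rcases b with b | b
    · exact ((hSdvd i b).mul_right _).mul_right _
    · exact ((dvd_mul_left (q:ℤ) _).mul_right _)
  set Q2 : Matrix (Fin n) (Fin n) ℤ := S' * K with hQ2
  have hUU : ((U⁻¹ : (Matrix (Fin n) (Fin n) (ZMod q))ˣ) : Matrix (Fin n) (Fin n) (ZMod q)) *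
      (U : Matrix (Fin n) (Fin n) (ZMod q)) = 1 := by
    rw [← Units.val_mul, inv_mul_cancel]
    rfl
  have hq2 : ∀ i j, (q : ℤ)^2 ∣ ((q : ℤ) * (1 : Matrix (Fin n) (Fin n) ℤ) i j - Q2 i j) := by
    intro i j
    have hsum : Q2 i j = (∑ b : Fin (d-n), S' i (Sum.inl b) * P (Sum.inl b) j)
        + (q : ℤ) * ∑ k : Fin n, S' i (Sum.inr k) * P (Sum.inr k) j := by
      rw [hQ2, Matrix.mul_apply, Fintype.sum_sum_type, Finset.mul_sum]
      congr 1
      · exact Finset.sum_congr rfl fun b _ => by rw [hKw]; simp [hw]; try ring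
      · exact Finset.sum_congr rfl fun k _ => by rw [hKw]; simp [hw]; try ring
    have h1 : (q : ℤ)^2 ∣ ∑ b : Fin (d-n), S' i (Sum.inl b) * P (Sum.inl b) j :=
      Finset.dvd_sum fun b _ => by rw [pow_two]; exact mul_dvd_mul (hSdvd i b) (hPdvd b j)
    have h2 : (q : ℤ) ∣ ((1 : Matrix (Fin n) (Fin n) ℤ) i j
        - ∑ k : Fin n, S' i (Sum.inr k) * P (Sum.inr k) j) := by
      rw [← ZMod.intCast_zmod_eq_zero_iff_dvd]
      push_cast
      have hs : (∑ k : Fin n, ((S' i (Sum.inr k) : ℤ) : ZMod q) * ((P (Sum.inr k) j : ℤ) : ZMod q))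
          = (1 : Matrix (Fin n) (Fin n) (ZMod q)) i j := by
        rw [← hUU, Matrix.mul_apply]
        exact Finset.sum_congr rfl fun k _ => by rw [hSU, hPU]
      rw [hs]
      simp [Matrix.one_apply, apply_ite (Int.cast : ℤ → ZMod q)]
    have heq : (q : ℤ) * (1 : Matrix (Fin n) (Fin n) ℤ) i j - Q2 i j
        = (q : ℤ) * ((1 : Matrix (Fin n) (Fin n) ℤ) i j
            - ∑ k : Fin n, S' i (Sum.inr k) * P (Sum.inr k) j)
          - ∑ b : Fin (d-n), S' i (Sum.inl b) * P (Sum.inl b) j := by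
      rw [hsum]; ring
    rw [heq]
    exact dvd_sub (by rw [pow_two]; exact mul_dvd_mul_left _ h2) h1
  -- block form of the big matrix
  have hDq : Dqmat d n q = a • (Ez.map (Int.cast : ℤ → ℝ)) := by
    unfold Dqmat
    rw [← ha_def]
    congr 1
    rw [Matrix.smul_one_eq_diagonal, ← Matrix.diagonal_one, Matrix.fromBlocks_diagonal, hEz,
      Matrix.diagonal_map (by simp)]
    exact congrArg Matrix.diagonal (funext fun x => by cases x <;> simp [hw])
  have hA : Dqmat d n q * γ.val.map (Int.cast : ℤ → ℝ)
      = a • ((Ez * γ.val).map (Int.cast : ℤ → ℝ)) := by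
    rw [hDq, Matrix.smul_mul, mapmulR]
  have hM : nMinus d n (((q : ℝ)⁻¹) • S'.map (Int.cast : ℤ → ℝ)) *
      Matrix.fromBlocks (Dqmat d n q * γ.val.map (Int.cast : ℤ → ℝ)) 0 0
        (1 : Matrix (Fin n) (Fin n) ℝ) *
      (nPlus d n (((q : ℝ)⁻¹) • R'.map (Int.cast : ℤ → ℝ)) * Dy d n (q : ℝ))⁻¹
      = Matrix.fromBlocks ((Ez * γ.val).map (Int.cast : ℤ → ℝ))
          (-((q : ℝ)⁻¹ • (K.map (Int.cast : ℤ → ℝ))))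
          ((q : ℝ)⁻¹ • (L.map (Int.cast : ℤ → ℝ)))
          ((q : ℝ)⁻¹ • 1 - ((q : ℝ)⁻¹ * (q : ℝ)⁻¹) • (Q2.map (Int.cast : ℤ → ℝ))) := by
    unfold nMinus nPlus Dy
    rw [← ha_def, hA, aux_M a (q : ℝ) ha hc]
    have h1 : (Ez * γ.val).map (Int.cast : ℤ → ℝ) * ((q : ℝ)⁻¹ • R'.map (Int.cast : ℤ → ℝ))
        = (q : ℝ)⁻¹ • (K.map (Int.cast : ℤ → ℝ)) := by
      rw [Matrix.mul_smul, ← mapmulR, hK, hP, Matrix.mul_assoc]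
    have h2 : ((q : ℝ)⁻¹ • S'.map (Int.cast : ℤ → ℝ)) * ((Ez * γ.val).map (Int.cast : ℤ → ℝ))
        = (q : ℝ)⁻¹ • (L.map (Int.cast : ℤ → ℝ)) := by
      rw [Matrix.smul_mul, ← mapmulR, hL, Matrix.mul_assoc]
    have h3 : ((q : ℝ)⁻¹ • L.map (Int.cast : ℤ → ℝ)) * ((q : ℝ)⁻¹ • R'.map (Int.cast : ℤ → ℝ))
        = ((q : ℝ)⁻¹ * (q : ℝ)⁻¹) • (Q2.map (Int.cast : ℤ → ℝ)) := by
      rw [Matrix.smul_mul, Matrix.mul_smul, smul_smul, ← mapmulR, hQ2, hL, hK, hP,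
        Matrix.mul_assoc, Matrix.mul_assoc]
    rw [h1, h2, h3]
  constructor
  · intro i j
    rcases i with i | i <;> rcases j with j | j
    · exact ⟨(Ez * γ.val) i j, by rw [hM]; simp⟩
    · obtain ⟨m, hm⟩ := hwP i j
      refine ⟨-m, ?_⟩
      rw [hM]
      simp only [Matrix.fromBlocks_apply₁₂, Matrix.neg_apply, Matrix.smul_apply,
        Matrix.map_apply, smul_eq_mul]
      rw [hKw, hm]
      push_cast
      field_simp
    · obtain ⟨m, hm⟩ := hLdvd i j
      refine ⟨m, ?_⟩
      rw [hM]
      simp only [Matrix.fromBlocks_apply₂₁, Matrix.smul_apply, Matrix.map_apply, smul_eq_mul]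
      rw [hm]
      push_cast
      field_simp
    · obtain ⟨m, hm⟩ := hq2 i j
      refine ⟨m, ?_⟩
      rw [hM]
      simp only [Matrix.fromBlocks_apply₂₂, Matrix.sub_apply, Matrix.smul_apply,
        Matrix.map_apply, smul_eq_mul]
      have hone : ((1 : Matrix (Fin n) (Fin n) ℤ) i j : ℝ) = (1 : Matrix (Fin n) (Fin n) ℝ) i j := by
        by_cases h : i = j <;> simp [Matrix.one_apply, h]
      have hmr : (q : ℝ) * ((1 : Matrix (Fin n) (Fin n) ℤ) i j : ℝ) - (Q2 i j : ℝ)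
          = (q : ℝ)^2 * (m : ℝ) := by
        have := congrArg (fun t : ℤ => (t : ℝ)) hm
        push_cast at this
        simpa using this
      rw [← hone]
      rw [show ((Q2 i j : ℤ) : ℝ) = (q : ℝ) * ((1 : Matrix (Fin n) (Fin n) ℤ) i j : ℝ)
        - (q : ℝ)^2 * (m : ℝ) from by linarith [hmr]]
      field_simp
      ring
  · rw [Matrix.det_mul, Matrix.det_mul]
    unfold nMinus nPlus Dy
    rw [← ha_def, aux_inv a (q : ℝ) ha hc, hA]
    rw [Matrix.det_fromBlocks_zero₁₂, Matrix.det_fromBlocks_zero₁₂,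
      Matrix.det_fromBlocks_zero₂₁, Matrix.det_one, Matrix.det_one]
    have hdetE : ((Ez.map (Int.cast : ℤ → ℝ))).det = (q : ℝ) ^ n := by
      rw [hEz, Matrix.diagonal_map (by simp), Matrix.det_diagonal, Fintype.prod_sum_type]
      simp [hw]
    have hdetG : ((γ.val.map (Int.cast : ℤ → ℝ))).det = 1 := by
      have h := RingHom.map_det (Int.castRingHom ℝ) γ.val
      simpa [RingHom.mapMatrix_apply, γ.prop] using h.symm
    rw [show ((Ez * γ.val).map (Int.cast : ℤ → ℝ))
        = Ez.map (Int.cast : ℤ → ℝ) * γ.val.map (Int.cast : ℤ → ℝ) from mapmulR _ _,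
      Matrix.det_smul, Matrix.det_mul, hdetE, hdetG,
      Matrix.det_smul, Matrix.det_smul, Matrix.det_one, Matrix.det_one]
    rw [Fintype.card_fin, inv_pow, inv_pow]
    field_simp

end
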